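/- Let k₀ > 0 and let L : [−k₀, k₀] → ℂ be continuously differentiable with L(−k₀) = conj(L(k₀)). Set ν := −L(k₀)/(2π). Then for every k ∈ ℂ with Im k ≠ 0, exp( (1/(2πi)) ∫_{−k₀}^{k₀} L(s)/(s − k) ds ) = exp( iν · Log(k − k₀) − i·conj(ν)·Log(k + k₀) + χ̃(k) ), where χ̃(k) := −(1/(2πi)) ∫_{−k₀}^{k₀} Log(k − s) · L'(s) ds and Log denotes the principal branch of the logarithm; that is, δ(k) = (k − k₀)^{iν} (k + k₀)^{−i conj(ν)} e^{χ̃(k)}. (This is the representation (3.14) of δ obtained by integration by parts.) -/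

import Mathlib

open Set MeasureTheory

noncomputable section

/-- `χ̃(k) = -(1/(2πi)) ∫_{-k₀}^{k₀} Log(k - s) L'(s) ds`. -/
def chiTilde (k₀ : ℝ) (L' : ℝ → ℂ) (k : ℂ) : ℂ :=
  -(2 * Real.pi * Complex.I)⁻¹ *
    ∫ s in (-k₀)..k₀, Complex.log (k - (s : ℂ)) * L' s

/-- Representation (3.14): for Im k ≠ 0, with ν = -L(k₀)/(2π),
δ(k) = exp(iν Log(k-k₀) - i conj(ν) Log(k+k₀) + χ̃(k))
     = (k-k₀)^{iν} (k+k₀)^{-i conj ν} e^{χ̃(k)},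
obtained by integration by parts (uses L(-k₀) = conj(L(k₀))). -/
theorem delta_representation (k₀ : ℝ) (hk₀ : 0 < k₀) (L L' : ℝ → ℂ)
    (hderiv : ∀ s ∈ Icc (-k₀) k₀, HasDerivWithinAt L (L' s) (Icc (-k₀) k₀) s)
    (hcont : ContinuousOn L' (Icc (-k₀) k₀))
    (hsym : L (-k₀) = starRingEnd ℂ (L k₀)) :
    ∀ k : ℂ, k.im ≠ 0 →
      Complex.exp ((2 * Real.pi * Complex.I)⁻¹ *
          ∫ s in (-k₀)..k₀, L s / ((s : ℂ) - k)) =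
        Complex.exp (Complex.I * (-L k₀ / (2 * Real.pi)) * Complex.log (k - (k₀ : ℂ))
          - Complex.I * starRingEnd ℂ (-L k₀ / (2 * Real.pi)) * Complex.log (k + (k₀ : ℂ))
          + chiTilde k₀ L' k) ∧
      Complex.exp ((2 * Real.pi * Complex.I)⁻¹ *
          ∫ s in (-k₀)..k₀, L s / ((s : ℂ) - k)) =
        (k - (k₀ : ℂ)) ^ (Complex.I * (-L k₀ / (2 * Real.pi))) *
          (k + (k₀ : ℂ)) ^ (-(Complex.I * starRingEnd ℂ (-L k₀ / (2 * Real.pi)))) *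
          Complex.exp (chiTilde k₀ L' k) := by
  intro k hk
  have hle : -k₀ ≤ k₀ := by linarith
  have huIcc : uIcc (-k₀) k₀ = Icc (-k₀) k₀ := uIcc_of_le hle
  -- derivative of s ↦ Log (k - s)
  have hv : ∀ x ∈ uIcc (-k₀) k₀,
      HasDerivWithinAt (fun s : ℝ => Complex.log (k - (s : ℂ))) (((x : ℂ) - k)⁻¹)
        (uIcc (-k₀) k₀) x := by
    intro x _
    have hinner : HasDerivAt (fun s : ℝ => k - (s : ℂ)) (-1) x := by
      simpa using (Complex.ofRealCLM.hasDerivAt (x := x)).const_sub k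
    have hslit : (k - (x : ℂ)) ∈ Complex.slitPlane := by
      refine Or.inr ?_
      simpa using hk
    have hlog := Complex.hasDerivAt_log hslit
    have := hlog.comp x hinner
    have heq : (k - (x : ℂ))⁻¹ * (-1) = ((x : ℂ) - k)⁻¹ := by
      rw [mul_neg_one, ← inv_neg]
      ring_nf
    rw [heq] at this
    exact this.hasDerivWithinAt
  have hu : ∀ x ∈ uIcc (-k₀) k₀, HasDerivWithinAt L (L' x) (uIcc (-k₀) k₀) x := by
    rw [huIcc]; exact hderiv
  have hu' : IntervalIntegrable L' volume (-k₀) k₀ := by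
    apply ContinuousOn.intervalIntegrable
    rw [huIcc]; exact hcont
  have hv' : IntervalIntegrable (fun x : ℝ => ((x : ℂ) - k)⁻¹) volume (-k₀) k₀ := by
    apply Continuous.intervalIntegrable
    apply Continuous.inv₀ (by continuity)
    intro x hx
    apply hk
    have := congrArg Complex.im hx
    simpa using this.symm
  have ibp := intervalIntegral.integral_mul_deriv_eq_deriv_mul_of_hasDerivWithinAt
    hu hv hu' hv'
  have hint : (∫ s in (-k₀)..k₀, L s / ((s : ℂ) - k))
      = ∫ s in (-k₀)..k₀, L s * ((s : ℂ) - k)⁻¹ := by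
    simp [div_eq_mul_inv]
  have hcast : ((-k₀ : ℝ) : ℂ) = -(k₀ : ℂ) := by push_cast; ring
  have hlogsum : (∫ s in (-k₀)..k₀, L' s * Complex.log (k - (s : ℂ)))
      = ∫ s in (-k₀)..k₀, Complex.log (k - (s : ℂ)) * L' s := by
    simp [mul_comm]
  -- the exponent identity
  have hexp : (2 * Real.pi * Complex.I)⁻¹ *
      ∫ s in (-k₀)..k₀, L s / ((s : ℂ) - k)
      = Complex.I * (-L k₀ / (2 * Real.pi)) * Complex.log (k - (k₀ : ℂ))
        - Complex.I * starRingEnd ℂ (-L k₀ / (2 * Real.pi)) * Complex.log (k + (k₀ : ℂ))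
        + chiTilde k₀ L' k := by
    have hconj : starRingEnd ℂ (-L k₀ / (2 * Real.pi)) = -L (-k₀) / (2 * Real.pi) := by
      rw [hsym]
      simp [map_div₀, Complex.conj_ofReal, map_ofNat]
    rw [hint, ibp, hcast] at *
    rw [chiTilde, ← hlogsum, hconj]
    have hsub : k - -(k₀ : ℂ) = k + (k₀ : ℂ) := by ring
    rw [hsub]
    have hπ : (Real.pi : ℂ) ≠ 0 := by
      exact_mod_cast Real.pi_ne_zero
    field_simp
    linear_combination (1 *
      (L k₀ * Complex.log (k - (k₀ : ℂ)) - L (-k₀) * Complex.log (k + (k₀ : ℂ)))) *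
      Complex.I_mul_I
  refine ⟨by rw [hexp], ?_⟩
  have h1 : (k - (k₀ : ℂ)) ≠ 0 := by
    intro h
    apply hk
    have := congrArg Complex.im h
    simpa using this
  have h2 : (k + (k₀ : ℂ)) ≠ 0 := by
    intro h
    apply hk
    have := congrArg Complex.im h
    simpa using this
  rw [Complex.cpow_def_of_ne_zero h1, Complex.cpow_def_of_ne_zero h2,
    ← Complex.exp_add, ← Complex.exp_add, hexp]
  congr 1
  ring
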